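/- For n ≥ 2, the Fibonacci and Lucas hybrid quaternions satisfy F̂_{n+2} - F̂_{n-2} = L̂_n. -/

import Mathlib

/-- A hybrid number over a ring `R`: `re + imI·𝐢 + imE·ε + imH·𝐡` with
`𝐢² = -1`, `ε² = 0`, `𝐡² = 1`, `𝐢ε = 1 - 𝐡`, `ε𝐢 = 1 + 𝐡`,
`𝐢𝐡 = ε + 𝐢`, `𝐡𝐢 = -ε - 𝐢`, `ε𝐡 = -ε`, `𝐡ε = ε`. -/
@[ext]
structure Hybrid (R : Type*) where
  re : R
  imI : R
  imE : R
  imH : R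

namespace Hybrid

variable {R : Type*} [Ring R]

instance : Zero (Hybrid R) := ⟨⟨0, 0, 0, 0⟩⟩
instance : One (Hybrid R) := ⟨⟨1, 0, 0, 0⟩⟩
instance : Add (Hybrid R) :=
  ⟨fun x y => ⟨x.re + y.re, x.imI + y.imI, x.imE + y.imE, x.imH + y.imH⟩⟩
instance : Neg (Hybrid R) := ⟨fun x => ⟨-x.re, -x.imI, -x.imE, -x.imH⟩⟩
instance : Sub (Hybrid R) :=
  ⟨fun x y => ⟨x.re - y.re, x.imI - y.imI, x.imE - y.imE, x.imH - y.imH⟩⟩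

/-- Multiplication of hybrid numbers, obtained by bilinear extension of the
multiplication table of the hybrid units (units commute with coefficients). -/
instance : Mul (Hybrid R) := ⟨fun x y =>
  ⟨x.re * y.re - x.imI * y.imI + x.imI * y.imE + x.imE * y.imI + x.imH * y.imH,
   x.re * y.imI + x.imI * y.re + x.imI * y.imH - x.imH * y.imI,
   x.re * y.imE + x.imE * y.re + x.imI * y.imH - x.imH * y.imI
     + x.imH * y.imE - x.imE * y.imH,
   x.re * y.imH + x.imH * y.re + x.imE * y.imI - x.imI * y.imE⟩⟩

instance {S : Type*} [SMul S R] : SMul S (Hybrid R) :=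
  ⟨fun s x => ⟨s • x.re, s • x.imI, s • x.imE, s • x.imH⟩⟩

/-- The hybrid unit `𝐢`. -/
def iu : Hybrid R := ⟨0, 1, 0, 0⟩
/-- The hybrid unit `ε`. -/
def eu : Hybrid R := ⟨0, 0, 1, 0⟩
/-- The hybrid unit `𝐡`. -/
def hu : Hybrid R := ⟨0, 0, 0, 1⟩

end Hybrid

noncomputable section

open Quaternion

/-- Hybrid quaternions: hybrid numbers with quaternion coefficients
(the quaternion units commute with the hybrid units). -/
abbrev HQ := Hybrid (ℍ[ℝ])

/-- The quaternion unit `i` in the hybrid quaternion algebra. -/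
def qi : HQ := ⟨⟨0, 1, 0, 0⟩, 0, 0, 0⟩
/-- The quaternion unit `j` in the hybrid quaternion algebra. -/
def qj : HQ := ⟨⟨0, 0, 1, 0⟩, 0, 0, 0⟩
/-- The quaternion unit `k` in the hybrid quaternion algebra. -/
def qk : HQ := ⟨⟨0, 0, 0, 1⟩, 0, 0, 0⟩

/-- Embedding of the real quaternions into the hybrid quaternions. -/
def eQ (q : ℍ[ℝ]) : HQ := ⟨q, 0, 0, 0⟩
/-- Embedding of the hybrid numbers into the hybrid quaternions. -/
def eH (z : Hybrid ℝ) : HQ :=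
  ⟨⟨z.re, 0, 0, 0⟩, ⟨z.imI, 0, 0, 0⟩, ⟨z.imE, 0, 0, 0⟩, ⟨z.imH, 0, 0, 0⟩⟩

/-- Fibonacci numbers, as real numbers. -/
def F (n : ℕ) : ℝ := Nat.fib n

/-- Lucas numbers, as real numbers. -/
def lucas : ℕ → ℝ
  | 0 => 2
  | 1 => 1
  | n + 2 => lucas (n + 1) + lucas n

/-- The Fibonacci quaternion `F̃ₘ = Fₘ + i F_{m+1} + j F_{m+2} + k F_{m+3}`. -/
def fq (m : ℕ) : ℍ[ℝ] := ⟨F m, F (m + 1), F (m + 2), F (m + 3)⟩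
/-- The Lucas quaternion `L̃ₘ`. -/
def lq (m : ℕ) : ℍ[ℝ] := ⟨lucas m, lucas (m + 1), lucas (m + 2), lucas (m + 3)⟩
/-- The Fibonacci hybrid number `F̆ₘ = Fₘ + 𝐢 F_{m+1} + ε F_{m+2} + 𝐡 F_{m+3}`. -/
def fh (m : ℕ) : Hybrid ℝ := ⟨F m, F (m + 1), F (m + 2), F (m + 3)⟩
/-- The Lucas hybrid number `L̆ₘ`. -/
def lh (m : ℕ) : Hybrid ℝ := ⟨lucas m, lucas (m + 1), lucas (m + 2), lucas (m + 3)⟩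
/-- The Fibonacci hybrid quaternion
`F̂ₙ = F̃ₙ + 𝐢 F̃_{n+1} + ε F̃_{n+2} + 𝐡 F̃_{n+3}
    = F̆ₙ + i F̆_{n+1} + j F̆_{n+2} + k F̆_{n+3}`. -/
def Fhat (n : ℕ) : HQ := ⟨fq n, fq (n + 1), fq (n + 2), fq (n + 3)⟩
/-- The Lucas hybrid quaternion `L̂ₙ`. -/
def Lhat (n : ℕ) : HQ := ⟨lq n, lq (n + 1), lq (n + 2), lq (n + 3)⟩

/-- `α = (1 + √5)/2`. -/
def ga : ℝ := (1 + Real.sqrt 5) / 2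
/-- `β = (1 - √5)/2`. -/
def gb : ℝ := (1 - Real.sqrt 5) / 2

/-- `x* = 1 + 𝐢 x + ε x² + 𝐡 x³` (a hybrid number with real coefficients). -/
def hstar (x : ℝ) : HQ :=
  ⟨1, ⟨x, 0, 0, 0⟩, ⟨x ^ 2, 0, 0, 0⟩, ⟨x ^ 3, 0, 0, 0⟩⟩
/-- `x̲ = 1 + i x + j x² + k x³` (a quaternion with real coefficients). -/
def qund (x : ℝ) : HQ := eQ ⟨1, x, x ^ 2, x ^ 3⟩


lemma key : ∀ m, F (m + 4) - F m = lucas (m + 2) := by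
  intro m
  induction m using Nat.strong_induction_on with
  | _ m ih =>
    match m with
    | 0 => simp [F, lucas]; norm_num
    | 1 => simp [F, lucas]; norm_num
    | m + 2 =>
      have h1 := ih m (by omega)
      have h2 := ih (m + 1) (by omega)
      have e1 : F (m + 2 + 4) = F (m + 1 + 4) + F (m + 4) := by
        simp [F, Nat.fib_add_two]; ring
      have e2 : F (m + 2) = F (m + 1) + F m := by
        simp [F, Nat.fib_add_two]; ring
      have e3 : lucas (m + 2 + 2) = lucas (m + 1 + 2) + lucas (m + 2) := rfl
      rw [e1, e2, e3, ← h1, ← h2]; ring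

/-- `F̂_{n+2} - F̂_{n-2} = L̂ₙ` for `n ≥ 2`. -/
theorem fib_lucas_hybrid_quaternion_diff (n : ℕ) (hn : 2 ≤ n) :
    Fhat (n + 2) - Fhat (n - 2) = Lhat n := by
  obtain ⟨m, rfl⟩ : ∃ m, n = m + 2 := ⟨n - 2, by omega⟩
  have e1 : ∀ a : ℕ, F (m + 4 + a) - F (m + a) = lucas (m + 2 + a) := by
    intro a
    simpa [show m + a + 4 = m + 4 + a from by omega,
      show m + a + 2 = m + 2 + a from by omega] using key (m + a)
  have e2 : ∀ a b : ℕ, F (m + 4 + a + b) - F (m + a + b) = lucas (m + 2 + a + b) := by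
    intro a b
    simpa [show m + (a + b) = m + a + b from by omega,
      show m + a + b + 4 = m + 4 + a + b from by omega,
      show m + a + b + 2 = m + 2 + a + b from by omega] using key (m + (a + b))
  have h0 := key m
  have hs : m + 2 - 2 = m := by omega
  rw [hs]
  show Fhat (m + 4) - Fhat m = Lhat (m + 2)
  ext <;>
    simp only [Fhat, Lhat, fq, lq, HSub.hSub, Sub.sub, Quaternion.re_sub,
      Quaternion.imI_sub, Quaternion.imJ_sub, Quaternion.imK_sub, Quaternion.instRing._aux_32] <;>
    linarith [h0, e1 1, e1 2, e1 3, e2 1 1, e2 1 2, e2 1 3, e2 2 1, e2 2 2,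
      e2 2 3, e2 3 1, e2 3 2, e2 3 3, e2 1 0, e2 2 0, e2 3 0, e2 0 1, e2 0 2, e2 0 3]
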